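/- Symplecticity of the implicit midpoint scheme (Proposition 2.2), expressed as preservation of the symplectic form on pairs of solutions: Let L > 0, Δt > 0, let Q, W : ℝ → ℝ be continuous L-periodic functions, and let (u, v) and (ũ, ṽ) be two pairs of twice continuously differentiable L-periodic functions ℝ → ℂ, each satisfying the one-step implicit midpoint relation i·(v − u) = −Δt·(w'' + Q·w) + w·W with w = (u + v)/2 (respectively w̃ = (ũ + ṽ)/2 for the second pair), with the same Q, W and Δt. Then Im ∫₀ᴸ v(x)·conj(ṽ(x)) dx = Im ∫₀ᴸ u(x)·conj(ũ(x)) dx. -/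

import Mathlib

open MeasureTheory Complex ComplexConjugate

private lemma periodic_deriv' {f : ℝ → ℂ} {L : ℝ} (hf : Function.Periodic f L) :
    Function.Periodic (deriv f) L := by
  intro x
  rw [← deriv_comp_add_const]
  congr 1
  ext y
  exact hf y

private lemma hasDerivAt_conj {f : ℝ → ℂ} {f' : ℂ} {x : ℝ} (hf : HasDerivAt f f' x) :
    HasDerivAt (fun y => conj (f y)) (conj f') x := by
  have := (Complex.conjCLE.toContinuousLinearMap.hasFDerivAt
    (x := f x)).comp_hasDerivAt x hf
  exact this

/-- Symplecticity of the implicit midpoint scheme (Proposition 2.2), expressed as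
preservation of the symplectic form `ω(u, ũ) = Im ∫₀ᴸ u · conj(ũ)` on pairs of solutions
of one implicit midpoint step for the stochastic linear Schrödinger equation. -/
theorem midpoint_step_symplectic
    (L Δt : ℝ) (hL : 0 < L) (hΔt : 0 < Δt)
    (Q W : ℝ → ℝ) (hQc : Continuous Q) (hWc : Continuous W)
    (hQp : Function.Periodic Q L) (hWp : Function.Periodic W L)
    (u v ut vt : ℝ → ℂ)
    (hu : ContDiff ℝ 2 u) (hv : ContDiff ℝ 2 v)
    (hut : ContDiff ℝ 2 ut) (hvt : ContDiff ℝ 2 vt)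
    (hup : Function.Periodic u L) (hvp : Function.Periodic v L)
    (hutp : Function.Periodic ut L) (hvtp : Function.Periodic vt L)
    (hstep : ∀ x : ℝ,
      Complex.I * (v x - u x) =
        -(Δt : ℂ) * (deriv (deriv (fun y => (u y + v y) / 2)) x
            + (Q x : ℂ) * ((u x + v x) / 2))
          + ((u x + v x) / 2) * (W x : ℂ))
    (hstept : ∀ x : ℝ,
      Complex.I * (vt x - ut x) =
        -(Δt : ℂ) * (deriv (deriv (fun y => (ut y + vt y) / 2)) x
            + (Q x : ℂ) * ((ut x + vt x) / 2))
          + ((ut x + vt x) / 2) * (W x : ℂ)) :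
    (∫ x in (0:ℝ)..L, v x * conj (vt x)).im
      = (∫ x in (0:ℝ)..L, u x * conj (ut x)).im := by
  -- midpoints
  set w : ℝ → ℂ := fun y => (u y + v y) / 2 with hw_def
  set wt : ℝ → ℂ := fun y => (ut y + vt y) / 2 with hwt_def
  have hw : ContDiff ℝ 2 w := (hu.add hv).div_const 2
  have hwt : ContDiff ℝ 2 wt := (hut.add hvt).div_const 2
  -- regularity of w and its derivatives
  have hw1 : ContDiff ℝ 1 (deriv w) := by
    have := (contDiff_succ_iff_deriv (n := 1)).mp (by exact_mod_cast hw)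
    exact this.2.2
  have hwt1 : ContDiff ℝ 1 (deriv wt) := by
    have := (contDiff_succ_iff_deriv (n := 1)).mp (by exact_mod_cast hwt)
    exact this.2.2
  have hwd : Differentiable ℝ w := hw.differentiable (by norm_num)
  have hwtd : Differentiable ℝ wt := hwt.differentiable (by norm_num)
  have hwd1 : Differentiable ℝ (deriv w) := hw1.differentiable one_ne_zero
  have hwtd1 : Differentiable ℝ (deriv wt) := hwt1.differentiable one_ne_zero
  have hwc2 : Continuous (deriv (deriv w)) := (contDiff_one_iff_deriv.mp hw1).2
  have hwtc2 : Continuous (deriv (deriv wt)) := (contDiff_one_iff_deriv.mp hwt1).2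
  -- periodicity
  have hwp : Function.Periodic w L := fun x => by simp [hw_def, hup x, hvp x]
  have hwtp : Function.Periodic wt L := fun x => by simp [hwt_def, hutp x, hvtp x]
  have hwp1 : Function.Periodic (deriv w) L := periodic_deriv' hwp
  have hwtp1 : Function.Periodic (deriv wt) L := periodic_deriv' hwtp
  -- define g and show its derivative is H
  set g : ℝ → ℂ := fun x => w x * conj (deriv wt x) - deriv w x * conj (wt x) with hg_def
  set H : ℝ → ℂ :=
    fun x => w x * conj (deriv (deriv wt) x) - deriv (deriv w) x * conj (wt x) with hH_def
  have hg' : ∀ x, HasDerivAt g (H x) x := by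
    intro x
    have h1 : HasDerivAt (fun y => w y * conj (deriv wt y))
        (deriv w x * conj (deriv wt x) + w x * conj (deriv (deriv wt) x)) x :=
      (hwd x).hasDerivAt.mul (hasDerivAt_conj (hwtd1 x).hasDerivAt)
    have h2 : HasDerivAt (fun y => deriv w y * conj (wt y))
        (deriv (deriv w) x * conj (wt x) + deriv w x * conj (deriv wt x)) x :=
      (hwd1 x).hasDerivAt.mul (hasDerivAt_conj (hwtd x).hasDerivAt)
    have := h1.sub h2
    convert this using 1
    case e'_4 => rfl
    case e'_8 => rfl
    case e'_9 => simp only [hH_def]; ring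
  -- ∫ H = g L - g 0 = 0
  have hHc : Continuous H :=
    ((hw.continuous.mul (Complex.continuous_conj.comp hwtc2)).sub
      (hwc2.mul (Complex.continuous_conj.comp hwt.continuous)))
  have hHint : ∫ x in (0:ℝ)..L, H x = 0 := by
    rw [intervalIntegral.integral_eq_sub_of_hasDerivAt
      (fun x _ => hg' x) (hHc.intervalIntegrable 0 L)]
    have : g L = g 0 := by
      have := hwp 0; have := hwtp 0
      simp only [hg_def]
      rw [show L = 0 + L by ring, hwp 0, hwtp 0, hwp1 0, hwtp1 0]
    rw [this, sub_self]
  -- pointwise identity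
  have hpt : ∀ x, v x * conj (vt x) - u x * conj (ut x) = (-Complex.I * Δt) * H x := by
    intro x
    have h1 := hstep x
    have h2 := congrArg conj (hstept x)
    simp only [map_mul, map_sub, map_add, map_neg, map_div₀, map_ofNat,
      Complex.conj_I, Complex.conj_ofReal] at h2
    simp only [hH_def, hw_def, hwt_def, map_add, map_div₀, map_ofNat]
    linear_combination (-Complex.I * ((conj (ut x) + conj (vt x)) / 2)) * h1
      + (Complex.I * ((u x + v x) / 2)) * h2
      + (v x * conj (vt x) - u x * conj (ut x)) * Complex.I_sq
  -- conclude
  have hic : Continuous fun x => u x * conj (ut x) :=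
    (hu.continuous.mul (Complex.continuous_conj.comp hut.continuous))
  have hic' : Continuous fun x => v x * conj (vt x) :=
    (hv.continuous.mul (Complex.continuous_conj.comp hvt.continuous))
  have hsplit : (∫ x in (0:ℝ)..L, v x * conj (vt x))
      - (∫ x in (0:ℝ)..L, u x * conj (ut x))
      = ∫ x in (0:ℝ)..L, (v x * conj (vt x) - u x * conj (ut x)) := by
    rw [intervalIntegral.integral_sub (hic'.intervalIntegrable 0 L)
      (hic.intervalIntegrable 0 L)]
  have : (∫ x in (0:ℝ)..L, v x * conj (vt x))
      - (∫ x in (0:ℝ)..L, u x * conj (ut x)) = 0 := by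
    rw [hsplit]
    calc ∫ x in (0:ℝ)..L, (v x * conj (vt x) - u x * conj (ut x))
        = ∫ x in (0:ℝ)..L, (-Complex.I * Δt) * H x := by
          apply intervalIntegral.integral_congr; intro x _; exact hpt x
      _ = (-Complex.I * Δt) * ∫ x in (0:ℝ)..L, H x := by
          rw [intervalIntegral.integral_const_mul]
      _ = 0 := by rw [hHint, mul_zero]
  have h := congrArg Complex.im this
  simpa [sub_eq_zero] using congrArg Complex.im (sub_eq_zero.mp this)
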